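/- Let Δ := conv{(0,0),(1,3),(3,1),(4,4)} ⊂ ℝ², so that Δ ∩ ℤ² = {(0,0),(1,1),(1,2),(1,3),(2,1),(2,2),(2,3),(3,1),(3,2),(3,3),(4,4)}. Then: (a) the only polynomial q ∈ ℂ[x,y] of total degree ≤ 2 vanishing at every point of Δ ∩ ℤ² is the zero polynomial; (b) there exists a nonzero polynomial q ∈ ℂ[x,y] of total degree ≤ 3 vanishing at every point of Δ ∩ ℤ². -/
import Mathlib


open MvPolynomial
set_option maxHeartbeats 1000000

/-- The canonical embedding of `ℤ^k` into `ℝ^k`. -/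
def castR {k : ℕ} (p : Fin k → ℤ) : Fin k → ℝ := fun i => (p i : ℝ)

/-- The lattice polygon `conv{(0,0),(1,3),(3,1),(4,4)}`. -/
noncomputable def ΔEx : Set (Fin 2 → ℝ) :=
  convexHull ℝ {![0, 0], ![1, 3], ![3, 1], ![4, 4]}

/-- The lattice points of `ΔEx`. -/
def SEx : Set (Fin 2 → ℤ) :=
  {![0, 0], ![1, 1], ![1, 2], ![1, 3], ![2, 1], ![2, 2], ![2, 3],
    ![3, 1], ![3, 2], ![3, 3], ![4, 4]}

lemma hull_le (f : (Fin 2 → ℝ) → ℝ) (hf : IsLinearMap ℝ f) (c : ℝ)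
    (h0 : f ![0,0] ≤ c) (h1 : f ![1,3] ≤ c) (h2 : f ![3,1] ≤ c) (h3 : f ![4,4] ≤ c) :
    ∀ x ∈ ΔEx, f x ≤ c := by
  intro x hx
  refine convexHull_min ?_ (convex_halfSpace_le hf c) hx
  intro y hy
  simp only [Set.mem_insert_iff, Set.mem_singleton_iff] at hy
  rcases hy with rfl|rfl|rfl|rfl <;> assumption

lemma mem4 (a b c d : ℝ) (ha : 0 ≤ a) (hb : 0 ≤ b) (hc : 0 ≤ c) (hd : 0 ≤ d)
    (hs : a + b + c + d = 1) :
    (a • ![0,0] + b • ![1,3] + c • ![3,1] + d • ![4,4] : Fin 2 → ℝ) ∈ ΔEx := by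
  have := (convex_convexHull ℝ ({![0, 0], ![1, 3], ![3, 1], ![4, 4]} : Set (Fin 2 → ℝ))).sum_mem
    (t := Finset.univ) (w := ![a,b,c,d]) (z := ![![0,0],![1,3],![3,1],![4,4]])
    (by intro i _; fin_cases i <;> assumption)
    (by simp [Fin.sum_univ_four]; linarith)
    (by intro i _; fin_cases i <;> apply subset_convexHull <;> simp)
  simpa [Fin.sum_univ_four, ΔEx] using this

lemma memΔ (x y : ℝ) (a b c d : ℝ) (ha : 0 ≤ a) (hb : 0 ≤ b) (hc : 0 ≤ c) (hd : 0 ≤ d)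
    (hs : a + b + c + d = 1) (hx : b + 3*c + 4*d = x) (hy : 3*b + c + 4*d = y) :
    ![x, y] ∈ ΔEx := by
  have := mem4 a b c d ha hb hc hd hs
  have hE : (a • ![0,0] + b • ![1,3] + c • ![3,1] + d • ![4,4] : Fin 2 → ℝ) = ![x, y] := by
    funext i
    fin_cases i <;> simp <;> linarith
  rwa [hE] at this

lemma decomp (q : MvPolynomial (Fin 2) ℂ) (h : q.totalDegree ≤ 2) :
    q = monomial 0 (coeff 0 q)
      + monomial (Finsupp.single 0 1) (coeff (Finsupp.single 0 1) q)
      + monomial (Finsupp.single 1 1) (coeff (Finsupp.single 1 1) q)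
      + monomial (Finsupp.single 0 2) (coeff (Finsupp.single 0 2) q)
      + monomial (Finsupp.single 0 1 + Finsupp.single 1 1)
          (coeff (Finsupp.single 0 1 + Finsupp.single 1 1) q)
      + monomial (Finsupp.single 1 2) (coeff (Finsupp.single 1 2) q) := by
  ext m
  simp only [coeff_add, coeff_monomial]
  have hext : ∀ d : Fin 2 →₀ ℕ, d 0 = m 0 → d 1 = m 1 → d = m := by
    intro d h0 h1
    ext i
    fin_cases i <;> assumption
  by_cases hm : m 0 + m 1 ≤ 2
  · have hcases : (m 0 = 0 ∧ m 1 = 0) ∨ (m 0 = 1 ∧ m 1 = 0) ∨ (m 0 = 0 ∧ m 1 = 1)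
        ∨ (m 0 = 2 ∧ m 1 = 0) ∨ (m 0 = 1 ∧ m 1 = 1) ∨ (m 0 = 0 ∧ m 1 = 2) := by omega
    rcases hcases with ⟨h0,h1⟩|⟨h0,h1⟩|⟨h0,h1⟩|⟨h0,h1⟩|⟨h0,h1⟩|⟨h0,h1⟩
    · obtain rfl := hext 0 (by simp [h0]) (by simp [h1])
      simp [Finsupp.ext_iff, Fin.forall_fin_two, Finsupp.single_apply]
    · obtain rfl := hext (Finsupp.single 0 1) (by simp [h0]) (by simp [Finsupp.single_apply, h1])
      simp [Finsupp.ext_iff, Fin.forall_fin_two, Finsupp.single_apply]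
    · obtain rfl := hext (Finsupp.single 1 1) (by simp [Finsupp.single_apply, h0]) (by simp [h1])
      simp [Finsupp.ext_iff, Fin.forall_fin_two, Finsupp.single_apply]
    · obtain rfl := hext (Finsupp.single 0 2) (by simp [h0]) (by simp [Finsupp.single_apply, h1])
      simp [Finsupp.ext_iff, Fin.forall_fin_two, Finsupp.single_apply]
    · obtain rfl := hext (Finsupp.single 0 1 + Finsupp.single 1 1)
        (by simp [Finsupp.single_apply, h0]) (by simp [Finsupp.single_apply, h1])
      simp [Finsupp.ext_iff, Fin.forall_fin_two, Finsupp.single_apply]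
    · obtain rfl := hext (Finsupp.single 1 2) (by simp [Finsupp.single_apply, h0]) (by simp [h1])
      simp [Finsupp.ext_iff, Fin.forall_fin_two, Finsupp.single_apply]
  · have hz : coeff m q = 0 := by
      apply coeff_eq_zero_of_totalDegree_lt
      have : ∑ i ∈ m.support, m i = m 0 + m 1 := by
        rw [Finset.sum_subset (Finset.subset_univ m.support)
          (by intro i _ hi; simpa using hi), Fin.sum_univ_two]
      omega
    rw [hz]
    have hne : ∀ d : Fin 2 →₀ ℕ, d 0 + d 1 ≤ 2 → ¬ (d = m) := by
      intro d hd hdm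
      rw [hdm] at hd; omega
    rw [if_neg (hne _ (by simp)), if_neg (hne _ (by simp [Finsupp.single_apply])),
        if_neg (hne _ (by simp [Finsupp.single_apply])),
        if_neg (hne _ (by simp [Finsupp.single_apply])),
        if_neg (hne _ (by simp [Finsupp.single_apply])),
        if_neg (hne _ (by simp [Finsupp.single_apply]))]
    simp

lemma eval_monomial₂ (f : Fin 2 → ℂ) (d : Fin 2 →₀ ℕ) (a : ℂ) :
    eval f (monomial d a) = a * f 0 ^ d 0 * f 1 ^ d 1 := by
  rw [eval_monomial, Finsupp.prod_fintype _ _ (fun _ => pow_zero _), Fin.prod_univ_two, mul_assoc]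

/-- The cubic `(x - y)(x² + xy + y² - 6x - 6y + 11)`. -/
noncomputable def Qcub : MvPolynomial (Fin 2) ℂ :=
  (X 0 - X 1) * (X 0 ^ 2 + X 0 * X 1 + X 1 ^ 2 - C 6 * X 0 - C 6 * X 1 + C 11)

/-- The lattice points of `conv{(0,0),(1,3),(3,1),(4,4)}` are the eleven listed points;
no nonzero conic passes through all of them, but some nonzero cubic does. -/
theorem example_cubic_no_conic :
    ({p : Fin 2 → ℤ | castR p ∈ ΔEx} = SEx) ∧
    (∀ q : MvPolynomial (Fin 2) ℂ, q.totalDegree ≤ 2 →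
        (∀ p ∈ SEx, MvPolynomial.eval (fun i => (p i : ℂ)) q = 0) → q = 0) ∧
    (∃ q : MvPolynomial (Fin 2) ℂ, q ≠ 0 ∧ q.totalDegree ≤ 3 ∧
        ∀ p ∈ SEx, MvPolynomial.eval (fun i => (p i : ℂ)) q = 0) := by
  refine ⟨?_, ?_, ?_⟩
  · -- lattice points
    ext p
    simp only [Set.mem_setOf_eq, SEx, Set.mem_insert_iff, Set.mem_singleton_iff]
    constructor
    · intro hp
      have lin1 : IsLinearMap ℝ (fun v : Fin 2 → ℝ => 3 * v 0 - v 1) := by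
        constructor <;> intros <;> simp <;> ring
      have lin2 : IsLinearMap ℝ (fun v : Fin 2 → ℝ => 3 * v 1 - v 0) := by
        constructor <;> intros <;> simp <;> ring
      have lin3 : IsLinearMap ℝ (fun v : Fin 2 → ℝ => v 1 - 3 * v 0) := by
        constructor <;> intros <;> simp <;> ring
      have lin4 : IsLinearMap ℝ (fun v : Fin 2 → ℝ => v 0 - 3 * v 1) := by
        constructor <;> intros <;> simp <;> ring
      have H1 := hull_le _ lin1 8 (by norm_num) (by norm_num) (by norm_num) (by norm_num)
        (castR p) hp
      have H2 := hull_le _ lin2 8 (by norm_num) (by norm_num) (by norm_num) (by norm_num)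
        (castR p) hp
      have H3 := hull_le _ lin3 0 (by norm_num) (by norm_num) (by norm_num) (by norm_num)
        (castR p) hp
      have H4 := hull_le _ lin4 0 (by norm_num) (by norm_num) (by norm_num) (by norm_num)
        (castR p) hp
      simp only [castR] at H1 H2 H3 H4
      have h1 : 3 * p 0 - p 1 ≤ 8 := by exact_mod_cast H1
      have h2 : 3 * p 1 - p 0 ≤ 8 := by exact_mod_cast H2
      have h3 : p 1 - 3 * p 0 ≤ 0 := by exact_mod_cast H3
      have h4 : p 0 - 3 * p 1 ≤ 0 := by exact_mod_cast H4
      have hp2 : p = ![p 0, p 1] := by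
        funext i; fin_cases i <;> rfl
      have hcases : (p 0 = 0 ∧ p 1 = 0) ∨ (p 0 = 1 ∧ p 1 = 1) ∨ (p 0 = 1 ∧ p 1 = 2)
          ∨ (p 0 = 1 ∧ p 1 = 3) ∨ (p 0 = 2 ∧ p 1 = 1) ∨ (p 0 = 2 ∧ p 1 = 2)
          ∨ (p 0 = 2 ∧ p 1 = 3) ∨ (p 0 = 3 ∧ p 1 = 1) ∨ (p 0 = 3 ∧ p 1 = 2)
          ∨ (p 0 = 3 ∧ p 1 = 3) ∨ (p 0 = 4 ∧ p 1 = 4) := by omega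
      rcases hcases with ⟨e0,e1⟩|⟨e0,e1⟩|⟨e0,e1⟩|⟨e0,e1⟩|⟨e0,e1⟩|⟨e0,e1⟩|⟨e0,e1⟩|⟨e0,e1⟩|⟨e0,e1⟩|⟨e0,e1⟩|⟨e0,e1⟩ <;>
        rw [hp2, e0, e1] <;> tauto
    · intro hp
      have hc : castR p = ![(p 0 : ℝ), (p 1 : ℝ)] := by
        funext i; fin_cases i <;> rfl
      rcases hp with rfl|rfl|rfl|rfl|rfl|rfl|rfl|rfl|rfl|rfl|rfl <;>
        rw [hc] <;> norm_num
      · exact memΔ 0 0 1 0 0 0 (by norm_num) (by norm_num) (by norm_num) (by norm_num)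
          (by norm_num) (by norm_num) (by norm_num)
      · exact memΔ 1 1 (3/4) 0 0 (1/4) (by norm_num) (by norm_num) (by norm_num) (by norm_num)
          (by norm_num) (by norm_num) (by norm_num)
      · exact memΔ 1 2 (1/4) (5/8) (1/8) 0 (by norm_num) (by norm_num) (by norm_num) (by norm_num)
          (by norm_num) (by norm_num) (by norm_num)
      · exact memΔ 1 3 0 1 0 0 (by norm_num) (by norm_num) (by norm_num) (by norm_num)
          (by norm_num) (by norm_num) (by norm_num)
      · exact memΔ 2 1 (1/4) (1/8) (5/8) 0 (by norm_num) (by norm_num) (by norm_num) (by norm_num)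
          (by norm_num) (by norm_num) (by norm_num)
      · exact memΔ 2 2 (1/2) 0 0 (1/2) (by norm_num) (by norm_num) (by norm_num) (by norm_num)
          (by norm_num) (by norm_num) (by norm_num)
      · exact memΔ 2 3 (1/8) (1/2) 0 (3/8) (by norm_num) (by norm_num) (by norm_num) (by norm_num)
          (by norm_num) (by norm_num) (by norm_num)
      · exact memΔ 3 1 0 0 1 0 (by norm_num) (by norm_num) (by norm_num) (by norm_num)
          (by norm_num) (by norm_num) (by norm_num)
      · exact memΔ 3 2 (1/8) 0 (1/2) (3/8) (by norm_num) (by norm_num) (by norm_num) (by norm_num)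
          (by norm_num) (by norm_num) (by norm_num)
      · exact memΔ 3 3 (1/4) 0 0 (3/4) (by norm_num) (by norm_num) (by norm_num) (by norm_num)
          (by norm_num) (by norm_num) (by norm_num)
      · exact memΔ 4 4 0 0 0 1 (by norm_num) (by norm_num) (by norm_num) (by norm_num)
          (by norm_num) (by norm_num) (by norm_num)
  · -- no nonzero conic
    intro q hq hv
    have h0 := hv ![0,0] (by simp [SEx])
    have h1 := hv ![1,1] (by simp [SEx])
    have h2 := hv ![2,2] (by simp [SEx])
    have h4 := hv ![1,2] (by simp [SEx])
    have h5 := hv ![2,1] (by simp [SEx])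
    have h6 := hv ![1,3] (by simp [SEx])
    rw [decomp q hq] at h0 h1 h2 h4 h5 h6
    simp only [eval_add, eval_monomial₂, Finsupp.add_apply, Finsupp.single_apply,
      Finsupp.coe_zero, Pi.zero_apply, Matrix.cons_val_zero, Matrix.cons_val_one,
      Matrix.head_cons] at h0 h1 h2 h4 h5 h6
    norm_num at h0 h1 h2 h4 h5 h6
    have ea : coeff 0 q = 0 := by linear_combination h0
    have eb : coeff (Finsupp.single 0 1) q = 0 := by
      linear_combination (-3/2) * h0 + (11/2) * h1 + (1/2) * h2 + (-5) * h4 + (-1) * h5 + (3/2) * h6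
    have ec : coeff (Finsupp.single 1 1) q = 0 := by
      linear_combination (-7/2) * h1 + (-1) * h2 + 5 * h4 + h5 + (-3/2) * h6
    have ed : coeff (Finsupp.single 0 2) q = 0 := by
      linear_combination (1/2) * h0 + (-5/2) * h1 + (-1/2) * h2 + 2 * h4 + h5 + (-1/2) * h6
    have ee : coeff (Finsupp.single 0 1 + Finsupp.single 1 1) q = 0 := by
      linear_combination h1 + h2 + (-1) * h4 + (-1) * h5
    have ef : coeff (Finsupp.single 1 2) q = 0 := by
      linear_combination (1/2) * h1 + (-1) * h4 + (1/2) * h6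
    rw [decomp q hq, ea, eb, ec, ed, ee, ef]
    simp
  · -- the cubic
    refine ⟨Qcub, ?_, ?_, ?_⟩
    · intro h
      have : eval ![(0 : ℂ), 1] Qcub = 0 := by rw [h]; simp
      rw [Qcub] at this
      simp at this
      norm_num at this
    · have hb1 : (X 0 - X 1 : MvPolynomial (Fin 2) ℂ).totalDegree ≤ 1 := by
        refine le_trans (totalDegree_sub _ _) ?_
        simp [totalDegree_X]
      have hb2 : (X 0 ^ 2 + X 0 * X 1 + X 1 ^ 2 - C 6 * X 0 - C 6 * X 1 + C 11 :
          MvPolynomial (Fin 2) ℂ).totalDegree ≤ 2 := by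
        refine le_trans (totalDegree_add _ _) (max_le ?_ (by simp [totalDegree_C]))
        refine le_trans (totalDegree_sub _ _) (max_le ?_ ?_)
        · refine le_trans (totalDegree_sub _ _) (max_le ?_ ?_)
          · refine le_trans (totalDegree_add _ _) (max_le ?_ (by simp [totalDegree_X_pow]))
            refine le_trans (totalDegree_add _ _) (max_le (by simp [totalDegree_X_pow]) ?_)
            refine le_trans (totalDegree_mul _ _) ?_
            simp [totalDegree_X]
          · refine le_trans (totalDegree_mul _ _) ?_
            simp [totalDegree_C, totalDegree_X]
        · refine le_trans (totalDegree_mul _ _) ?_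
          simp [totalDegree_C, totalDegree_X]
      calc Qcub.totalDegree ≤ _ + _ := totalDegree_mul _ _
        _ ≤ 1 + 2 := add_le_add hb1 hb2
        _ = 3 := rfl
    · intro p hp
      simp only [SEx, Set.mem_insert_iff, Set.mem_singleton_iff] at hp
      rcases hp with rfl|rfl|rfl|rfl|rfl|rfl|rfl|rfl|rfl|rfl|rfl <;>
        · rw [Qcub]
          simp
          try norm_num
          try ring
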